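/- arXiv:math/0502112 — 2 statements merged into one kernel-verified Lean document; each statement's English description precedes it below -/
import Mathlib

section
/- Let R̄ be a commutative local ring and d ≥ 2. There exists a sequence of pairs of distinct indices (i_1,j_1),…,(i_M,j_M) with M = (3d² − d − 2)/2, depending only on d, such that every element g ∈ SL_d(R̄) can be written as g = E_{i_1 j_1}(r_1)·E_{i_2 j_2}(r_2)⋯E_{i_M j_M}(r_M) for some r_1,…,r_M ∈ R̄. In particular SL_d(R̄) is boundedly generated by its elementary subgroups, in a fixed order of factors. -/
def elem {A : Type*} [CommRing A] {d : ℕ} (i j : Fin d) (h : i ≠ j) (r : A) :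
    Matrix.SpecialLinearGroup (Fin d) A :=
  ⟨Matrix.transvection i j r, Matrix.det_transvection_of_ne i j h r⟩

namespace BEG

variable {R : Type*} [CommRing R] {d : ℕ}

/-- Total version of `elem`. -/
def elem' (i j : Fin d) (r : R) : Matrix.SpecialLinearGroup (Fin d) R :=
  if h : i ≠ j then elem i j h r else 1

lemma elem'_eq (i j : Fin d) (h : i ≠ j) (r : R) : elem' i j r = elem i j h r := dif_pos h

lemma coe_elem' (i j : Fin d) (h : i ≠ j) (r : R) :
    ((elem' i j r : Matrix.SpecialLinearGroup (Fin d) R) : Matrix (Fin d) (Fin d) R)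
      = Matrix.transvection i j r := by
  rw [elem'_eq i j h]; rfl

lemma elem'_zero (i j : Fin d) : elem' i j (0 : R) = 1 := by
  unfold elem'
  split
  · apply Subtype.ext
    simp [elem, Matrix.transvection_zero]
  · rfl

/-- product of a list of elementary matrices with coefficients -/
def PP (cs : List ((Fin d × Fin d) × R)) : Matrix.SpecialLinearGroup (Fin d) R :=
  (cs.map fun x => elem' x.1.1 x.1.2 x.2).prod

def CanExpr (l : List (Fin d × Fin d)) (g : Matrix.SpecialLinearGroup (Fin d) R) : Prop :=
  ∃ cs : List ((Fin d × Fin d) × R), cs.map Prod.fst = l ∧ g = PP cs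

lemma canExpr_PP (cs : List ((Fin d × Fin d) × R)) : CanExpr (cs.map Prod.fst) (PP cs) :=
  ⟨cs, rfl, rfl⟩

lemma CanExpr.mul {l l' : List (Fin d × Fin d)} {g g' : Matrix.SpecialLinearGroup (Fin d) R} :
    CanExpr l g → CanExpr l' g' → CanExpr (l ++ l') (g * g')
  | ⟨cs, h1, h2⟩, ⟨cs', h1', h2'⟩ =>
    ⟨cs ++ cs', by simp [h1, h1'], by simp [PP, h2, h2']⟩


lemma rowP_apply (q : Fin d) (L : List (Fin d)) (hL : ∀ i ∈ L, i ≠ q) (c : Fin d → R)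
    (g : Matrix.SpecialLinearGroup (Fin d) R) (a b : Fin d) :
    ((PP (L.map fun i => ((q, i), c i)) * g : Matrix.SpecialLinearGroup (Fin d) R) :
        Matrix (Fin d) (Fin d) R) a b
      = (g : Matrix (Fin d) (Fin d) R) a b
        + if a = q then (L.map fun i => c i * (g : Matrix (Fin d) (Fin d) R) i b).sum else 0 := by
  induction L generalizing a b with
  | nil => simp [PP]
  | cons i L ih =>
    have hiq : q ≠ i := (hL i (by simp)).symm
    have hL' : ∀ j ∈ L, j ≠ q := fun j hj => hL j (by simp [hj])
    have hPP : PP ((i :: L).map fun i => ((q, i), c i)) * g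
        = elem' q i (c i) * (PP (L.map fun i => ((q, i), c i)) * g) := by
      simp [PP, mul_assoc]
    rw [hPP, Matrix.SpecialLinearGroup.coe_mul, coe_elem' _ _ hiq]
    by_cases ha : a = q
    · subst ha
      rw [Matrix.transvection_mul_apply_same, ih hL', ih hL',
        if_pos rfl, if_pos rfl, if_neg hiq.symm]
      simp only [List.map_cons, List.sum_cons]
      ring
    · rw [Matrix.transvection_mul_apply_of_ne _ _ _ _ ha, ih hL', if_neg ha, if_neg ha]

lemma colP_apply (q : Fin d) (L : List (Fin d)) (hL : ∀ i ∈ L, i ≠ q) (hnd : L.Nodup)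
    (c : Fin d → R) (g : Matrix.SpecialLinearGroup (Fin d) R) (a b : Fin d) :
    ((PP (L.map fun i => ((i, q), c i)) * g : Matrix.SpecialLinearGroup (Fin d) R) :
        Matrix (Fin d) (Fin d) R) a b
      = (g : Matrix (Fin d) (Fin d) R) a b
        + if a ∈ L then c a * (g : Matrix (Fin d) (Fin d) R) q b else 0 := by
  induction L generalizing a b with
  | nil => simp [PP]
  | cons i L ih =>
    have hiq : i ≠ q := hL i (by simp)
    have hL' : ∀ j ∈ L, j ≠ q := fun j hj => hL j (by simp [hj])
    have hnd' : L.Nodup := hnd.of_cons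
    have hiL : i ∉ L := (List.nodup_cons.mp hnd).1
    have hqL : q ∉ L := fun hq => (hL q (by simp [hq])) rfl
    have hPP : PP ((i :: L).map fun i => ((i, q), c i)) * g
        = elem' i q (c i) * (PP (L.map fun i => ((i, q), c i)) * g) := by
      simp [PP, mul_assoc]
    rw [hPP, Matrix.SpecialLinearGroup.coe_mul, coe_elem' _ _ hiq]
    by_cases ha : a = i
    · subst ha
      rw [Matrix.transvection_mul_apply_same, ih hL' hnd', ih hL' hnd',
        if_neg hiL, if_neg hqL, if_pos (show a ∈ a :: L from List.mem_cons_self)]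
      ring
    · rw [Matrix.transvection_mul_apply_of_ne _ _ _ _ ha, ih hL' hnd']
      by_cases haL : a ∈ L
      · rw [if_pos haL, if_pos (List.mem_cons_of_mem _ haL)]
      · rw [if_neg haL, if_neg (by simp [ha, haL])]

lemma rtP_apply (q : Fin d) (L : List (Fin d)) (hL : ∀ i ∈ L, i ≠ q) (hnd : L.Nodup)
    (e : Fin d → R) (g : Matrix.SpecialLinearGroup (Fin d) R) (a b : Fin d) :
    ((g * PP (L.map fun i => ((q, i), e i)) : Matrix.SpecialLinearGroup (Fin d) R) :
        Matrix (Fin d) (Fin d) R) a b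
      = (g : Matrix (Fin d) (Fin d) R) a b
        + if b ∈ L then (g : Matrix (Fin d) (Fin d) R) a q * e b else 0 := by
  induction L generalizing g a b with
  | nil => simp [PP]
  | cons i L ih =>
    have hiq : q ≠ i := (hL i (by simp)).symm
    have hL' : ∀ j ∈ L, j ≠ q := fun j hj => hL j (by simp [hj])
    have hnd' : L.Nodup := hnd.of_cons
    have hiL : i ∉ L := (List.nodup_cons.mp hnd).1
    have hPP : g * PP ((i :: L).map fun i => ((q, i), e i))
        = (g * elem' q i (e i)) * PP (L.map fun i => ((q, i), e i)) := by
      simp [PP, mul_assoc]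
    have hg' : ∀ x y : Fin d,
        ((g * elem' q i (e i) : Matrix.SpecialLinearGroup (Fin d) R) :
          Matrix (Fin d) (Fin d) R) x y
        = (g : Matrix (Fin d) (Fin d) R) x y
          + if y = i then (g : Matrix (Fin d) (Fin d) R) x q * e i else 0 := by
      intro x y
      rw [Matrix.SpecialLinearGroup.coe_mul, coe_elem' _ _ hiq]
      by_cases hy : y = i
      · subst hy
        rw [Matrix.mul_transvection_apply_same, if_pos rfl]
        ring
      · rw [Matrix.mul_transvection_apply_of_ne _ _ _ _ hy, if_neg hy, add_zero]
    rw [hPP, ih hL' hnd', hg' a b, hg' a q, if_neg hiq]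
    by_cases hb : b = i
    · subst hb
      rw [if_pos rfl, if_neg hiL, if_pos (show b ∈ b :: L from List.mem_cons_self)]
      ring
    · rw [if_neg hb]
      by_cases hbL : b ∈ L
      · rw [if_pos hbL, if_pos (List.mem_cons_of_mem _ hbL)]
        ring
      · rw [if_neg hbL, if_neg (by simp [hb, hbL])]
        ring


lemma sum_map_neg {α : Type*} (L : List α) (f : α → R) :
    (L.map fun i => -(f i)).sum = -(L.map f).sum := by
  induction L with
  | nil => simp
  | cons i L ih => simp [ih]; ring

lemma rowP_cancel (q : Fin d) (L : List (Fin d)) (hL : ∀ i ∈ L, i ≠ q) (c : Fin d → R)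
    (g : Matrix.SpecialLinearGroup (Fin d) R) :
    PP (L.map fun i => ((q, i), -(c i))) * (PP (L.map fun i => ((q, i), c i)) * g) = g := by
  apply Matrix.SpecialLinearGroup.ext
  intro a b
  rw [show ((PP (L.map fun i => ((q, i), -(c i))) *
      (PP (L.map fun i => ((q, i), c i)) * g) :
      Matrix.SpecialLinearGroup (Fin d) R) : Matrix (Fin d) (Fin d) R) a b =
      _ from rowP_apply q L hL (fun i => -(c i)) _ a b]
  have hterm : (L.map fun i => -(c i) *
      ((PP (L.map fun i => ((q, i), c i)) * g :
        Matrix.SpecialLinearGroup (Fin d) R) : Matrix (Fin d) (Fin d) R) i b)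
      = L.map fun i => -(c i * (g : Matrix (Fin d) (Fin d) R) i b) := by
    apply List.map_congr_left
    intro i hi
    rw [rowP_apply q L hL c g i b, if_neg (hL i hi)]
    ring
  rw [hterm, sum_map_neg, rowP_apply q L hL c g a b]
  by_cases ha : a = q
  · rw [if_pos ha, if_pos ha]
    ring
  · rw [if_neg ha, if_neg ha]
    ring

lemma colP_cancel (q : Fin d) (L : List (Fin d)) (hL : ∀ i ∈ L, i ≠ q) (hnd : L.Nodup)
    (c : Fin d → R) (g : Matrix.SpecialLinearGroup (Fin d) R) :
    PP (L.map fun i => ((i, q), -(c i))) * (PP (L.map fun i => ((i, q), c i)) * g) = g := by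
  have hqL : q ∉ L := fun hq => (hL q hq) rfl
  apply Matrix.SpecialLinearGroup.ext
  intro a b
  rw [show ((PP (L.map fun i => ((i, q), -(c i))) *
      (PP (L.map fun i => ((i, q), c i)) * g) :
      Matrix.SpecialLinearGroup (Fin d) R) : Matrix (Fin d) (Fin d) R) a b =
      _ from colP_apply q L hL hnd (fun i => -(c i)) _ a b,
    colP_apply q L hL hnd c g a b, colP_apply q L hL hnd c g q b, if_neg hqL]
  by_cases ha : a ∈ L
  · rw [if_pos ha, if_pos ha]
    ring
  · rw [if_neg ha, if_neg ha]
    ring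

lemma rtP_cancel (q : Fin d) (L : List (Fin d)) (hL : ∀ i ∈ L, i ≠ q) (hnd : L.Nodup)
    (e : Fin d → R) (g : Matrix.SpecialLinearGroup (Fin d) R) :
    (g * PP (L.map fun i => ((q, i), e i))) * PP (L.map fun i => ((q, i), -(e i))) = g := by
  have hqL : q ∉ L := fun hq => (hL q hq) rfl
  apply Matrix.SpecialLinearGroup.ext
  intro a b
  rw [show (((g * PP (L.map fun i => ((q, i), e i))) * PP (L.map fun i => ((q, i), -(e i))) :
      Matrix.SpecialLinearGroup (Fin d) R) : Matrix (Fin d) (Fin d) R) a b =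
      _ from rtP_apply q L hL hnd (fun i => -(e i)) _ a b,
    rtP_apply q L hL hnd e g a b, rtP_apply q L hL hnd e g a q, if_neg hqL]
  by_cases hb : b ∈ L
  · rw [if_pos hb, if_pos hb]
    ring
  · rw [if_neg hb, if_neg hb]
    ring

lemma exists_unit_col [IsLocalRing R] (g : Matrix.SpecialLinearGroup (Fin d) R) (p : Fin d)
    (h0 : ∀ i : Fin d, (i : ℕ) < (p : ℕ) → (g : Matrix (Fin d) (Fin d) R) i p = 0) :
    ∃ i : Fin d, (p : ℕ) ≤ (i : ℕ) ∧ IsUnit ((g : Matrix (Fin d) (Fin d) R) i p) := by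
  by_contra h
  push_neg at h
  have hall : ∀ i : Fin d,
      IsLocalRing.residue R ((g : Matrix (Fin d) (Fin d) R) i p) = 0 := by
    intro i
    rcases lt_or_ge (i : ℕ) (p : ℕ) with hi | hi
    · rw [h0 i hi]; exact map_zero _
    · have hnu : ¬IsUnit ((g : Matrix (Fin d) (Fin d) R) i p) := h i hi
      exact Ideal.Quotient.eq_zero_iff_mem.mpr hnu
  have hdet0 : ((IsLocalRing.residue R).mapMatrix
      ((g : Matrix (Fin d) (Fin d) R))).det = 0 := by
    apply Matrix.det_eq_zero_of_column_eq_zero p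
    intro i
    simpa using hall i
  rw [← RingHom.map_det] at hdet0
  rw [Matrix.SpecialLinearGroup.det_coe, map_one] at hdet0
  exact one_ne_zero hdet0


/-- the list of indices `a, a+1, ..., a+len-1` as elements of `Fin d` -/
def rangeList (d a len : ℕ) (h : a + len ≤ d) : List (Fin d) :=
  (List.finRange len).map fun k : Fin len => ⟨a + k.1, by have := k.2; omega⟩

lemma rangeList_length (d a len : ℕ) (h : a + len ≤ d) :
    (rangeList d a len h).length = len := by
  rw [rangeList, List.length_map, List.length_finRange]

lemma mem_rangeList {d a len : ℕ} (h : a + len ≤ d) (i : Fin d) :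
    i ∈ rangeList d a len h ↔ a ≤ (i : ℕ) ∧ (i : ℕ) < a + len := by
  constructor
  · intro hi
    obtain ⟨k, -, rfl⟩ := List.mem_map.mp hi
    have := k.2
    refine ⟨?_, ?_⟩
    · show a ≤ a + k.1
      omega
    · show a + k.1 < a + len
      omega
  · rintro ⟨h1, h2⟩
    refine List.mem_map.mpr ⟨⟨(i : ℕ) - a, by omega⟩, List.mem_finRange _, ?_⟩
    apply Fin.val_injective
    show a + ((i : ℕ) - a) = (i : ℕ)
    omega

lemma nodup_rangeList (d a len : ℕ) (h : a + len ≤ d) :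
    (rangeList d a len h).Nodup := by
  rw [rangeList]
  apply List.Nodup.map _ (List.nodup_finRange len)
  intro x y hxy
  have : a + x.1 = a + y.1 := congrArg Fin.val hxy
  exact Fin.val_injective (by omega)

/-- length of the word needed for block size `n` -/
def Len : ℕ → ℕ
  | 0 => 0
  | 1 => 0
  | (n + 2) => Len (n + 1) + 3 * n + 4

lemma main [IsLocalRing R] (n : ℕ) (hn : n ≤ d) :
    ∃ l : List (Fin d × Fin d),
      (∀ q ∈ l, q.1 ≠ q.2) ∧ l.length = Len n ∧
      ∀ g : Matrix.SpecialLinearGroup (Fin d) R,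
        (∀ i j : Fin d, ((i : ℕ) < d - n ∨ (j : ℕ) < d - n) →
          (g : Matrix (Fin d) (Fin d) R) i j = if i = j then 1 else 0) →
        CanExpr l g := by
  induction n with
  | zero =>
    refine ⟨[], by simp, by simp [Len], ?_⟩
    intro g hg
    have hg1 : g = 1 := by
      apply Matrix.SpecialLinearGroup.ext
      intro i j
      show (g : Matrix (Fin d) (Fin d) R) i j = ((1 : Matrix.SpecialLinearGroup (Fin d) R) :
        Matrix (Fin d) (Fin d) R) i j
      rw [hg i j (Or.inl (by have := i.2; omega)), Matrix.SpecialLinearGroup.coe_one,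
        Matrix.one_apply]
    rw [hg1]
    exact ⟨[], rfl, rfl⟩
  | succ n ih =>
    rcases Nat.eq_zero_or_pos n with rfl | hnpos
    · -- block size 1 : a matrix which is the identity outside the last diagonal entry
      refine ⟨[], by simp, by simp [Len], ?_⟩
      intro g hg
      have hd1 : 1 ≤ d := hn
      set z : Fin d := ⟨d - 1, by omega⟩ with hz
      have hzv : (z : ℕ) = d - 1 := rfl
      have hdiag : (g : Matrix (Fin d) (Fin d) R)
          = Matrix.diagonal (fun i => (g : Matrix (Fin d) (Fin d) R) i i) := by
        ext i j
        by_cases hij : i = j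
        · subst hij; rw [Matrix.diagonal_apply_eq]
        · rw [Matrix.diagonal_apply_ne _ hij, hg i j ?_, if_neg hij]
          have hvne : (i : ℕ) ≠ (j : ℕ) := fun hv => hij (Fin.val_injective hv)
          have := i.2; have := j.2
          omega
      have hdet := Matrix.SpecialLinearGroup.det_coe g
      rw [hdiag, Matrix.det_diagonal] at hdet
      rw [Finset.prod_eq_single z (fun i _ hi => by
        refine (hg i i (Or.inl ?_)).trans (if_pos rfl)
        have hvne : (i : ℕ) ≠ (z : ℕ) := fun hv => hi (Fin.val_injective hv)
        have := i.2
        omega) (fun h => absurd (Finset.mem_univ z) h)] at hdet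
      have hg1 : g = 1 := by
        apply Matrix.SpecialLinearGroup.ext
        intro i j
        show (g : Matrix (Fin d) (Fin d) R) i j = ((1 : Matrix.SpecialLinearGroup (Fin d) R) :
          Matrix (Fin d) (Fin d) R) i j
        rw [Matrix.SpecialLinearGroup.coe_one, Matrix.one_apply]
        by_cases hij : i = j
        · subst hij
          rw [if_pos rfl]
          by_cases hiz : i = z
          · subst hiz; exact hdet
          · refine (hg i i (Or.inl ?_)).trans (if_pos rfl)
            have hvne : (i : ℕ) ≠ (z : ℕ) := fun hv => hiz (Fin.val_injective hv)
            have := i.2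
            omega
        · rw [hdiag, Matrix.diagonal_apply_ne _ hij, if_neg hij]
      rw [hg1]
      exact ⟨[], rfl, rfl⟩
    · -- main step, n ≥ 1
      obtain ⟨m, rfl⟩ : ∃ m, n = m + 1 := ⟨n - 1, by omega⟩
      obtain ⟨l', hval', hlen', hexpr'⟩ := ih (by omega)
      set p := d - (m + 2) with hpdef
      have hp : p + (m + 2) = d := by omega
      set P : Fin d := ⟨p, by omega⟩ with hPdef
      set P1 : Fin d := ⟨p + 1, by omega⟩ with hP1def
      have hPv : (P : ℕ) = p := rfl
      have hP1v : (P1 : ℕ) = p + 1 := rfl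
      have hPP1 : P ≠ P1 := fun h => by have := congrArg Fin.val h; omega
      obtain ⟨Ic, hIcdef⟩ : ∃ Ic : List (Fin d), Ic = rangeList d (p + 1) (m + 1) (by omega) :=
        ⟨_, rfl⟩
      obtain ⟨IA, hIAdef⟩ : ∃ IA : List (Fin d), IA = P :: rangeList d (p + 2) m (by omega) :=
        ⟨_, rfl⟩
      have hIcmem : ∀ i : Fin d, i ∈ Ic ↔ p + 1 ≤ (i : ℕ) := by
        intro i
        rw [hIcdef, mem_rangeList]
        have := i.2
        omega
      have hIcne : ∀ i ∈ Ic, i ≠ P := by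
        intro i hi h
        have h1 := (hIcmem i).mp hi
        have := congrArg Fin.val h
        omega
      have hIcnd : Ic.Nodup := hIcdef ▸ nodup_rangeList _ _ _ _
      have hPIc : P ∉ Ic := fun h => by have := (hIcmem P).mp h; omega
      have hIAmem : ∀ i : Fin d, i ∈ IA ↔ (p ≤ (i : ℕ) ∧ (i : ℕ) ≠ p + 1) := by
        intro i
        rw [hIAdef, List.mem_cons, mem_rangeList]
        have hi2 := i.2
        have hiP : i = P ↔ (i : ℕ) = p :=
          ⟨fun h => congrArg Fin.val h, fun h => Fin.val_injective h⟩
        rw [hiP]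
        omega
      have hIAne : ∀ i ∈ IA, i ≠ P1 := by
        intro i hi h
        have h1 := (hIAmem i).mp hi
        have := congrArg Fin.val h
        omega
      have hIAnd : IA.Nodup := by
        rw [hIAdef, List.nodup_cons]
        refine ⟨fun hmem => ?_, nodup_rangeList _ _ _ _⟩
        have := (mem_rangeList _ P).mp hmem
        omega
      -- the fixed word
      refine ⟨(IA.map fun i => (P1, i)) ++ ([(P, P1)] ++ ((Ic.map fun i => (i, P)) ++
        (l' ++ (Ic.map fun i => (P, i))))), ?_, ?_, ?_⟩
      · intro q hq
        simp only [List.mem_append, List.mem_map, List.mem_cons, List.not_mem_nil,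
          or_false] at hq
        rcases hq with (⟨i, hi, rfl⟩ | rfl | ⟨i, hi, rfl⟩ | hq | ⟨i, hi, rfl⟩)
        · exact (hIAne i hi).symm
        · exact hPP1
        · exact hIcne i hi
        · exact hval' q hq
        · exact fun h => (hIcne i hi) h.symm
      · rw [hIcdef, hIAdef]
        simp only [List.length_append, List.length_map, List.length_cons, hlen',
          rangeList_length, List.length_nil]
        have h1 : m + 1 + 1 = m + 2 := rfl
        have h2 : Len (m + 2) = Len (m + 1) + 3 * m + 4 := rfl
        rw [h1, h2]
        omega
      · intro g hg
        have hgp : ∀ i j : Fin d, ((i : ℕ) < p ∨ (j : ℕ) < p) →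
            (g : Matrix (Fin d) (Fin d) R) i j = if i = j then 1 else 0 := by
          intro i j hij
          exact hg i j (by omega)
        -- Step 0: there is a unit in column P at or below the diagonal
        obtain ⟨i0, hi0p, hi0u⟩ := exists_unit_col g P (fun i hi => by
          rw [hgp i P (Or.inl (by omega)), if_neg (fun h => by
            have := congrArg Fin.val h; omega)])
        -- Step A: make the (P1, P) entry a unit
        have hs : ∃ s : Fin d → R, IsUnit ((g : Matrix (Fin d) (Fin d) R) P1 P
            + (IA.map fun i => s i * (g : Matrix (Fin d) (Fin d) R) i P).sum) := by
          by_cases hu : IsUnit ((g : Matrix (Fin d) (Fin d) R) P1 P)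
          · refine ⟨fun _ => 0, ?_⟩
            have hs0 : (IA.map fun i =>
                (0 : R) * (g : Matrix (Fin d) (Fin d) R) i P).sum = 0 := by
              apply List.sum_eq_zero
              intro x hx
              obtain ⟨i, hi, rfl⟩ := List.mem_map.mp hx
              rw [zero_mul]
            rw [hs0, add_zero]
            exact hu
          · refine ⟨fun i => if i = i0 then 1 else 0, ?_⟩
            have hi0ne : i0 ≠ P1 := fun h => hu (h ▸ hi0u)
            have hi0IA : i0 ∈ IA := (hIAmem i0).mpr ⟨by omega, fun h =>
              hi0ne (Fin.val_injective (h.trans hP1v.symm))⟩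
            have hperm := (List.perm_cons_erase hi0IA).map
              (fun i => (if i = i0 then (1:R) else 0) * (g : Matrix (Fin d) (Fin d) R) i P)
            rw [hperm.sum_eq, List.map_cons, List.sum_cons]
            have hrest : ((IA.erase i0).map fun i =>
                (if i = i0 then (1:R) else 0) * (g : Matrix (Fin d) (Fin d) R) i P).sum = 0 := by
              apply List.sum_eq_zero
              intro x hx
              obtain ⟨i, hi, rfl⟩ := List.mem_map.mp hx
              have hine : i ≠ i0 := ((List.Nodup.mem_erase_iff hIAnd).mp hi).1
              rw [if_neg hine, zero_mul]
            rw [hrest, add_zero, if_pos rfl, one_mul]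
            by_contra hsum
            have h1 : (g : Matrix (Fin d) (Fin d) R) P1 P ∈ IsLocalRing.maximalIdeal R := by
              rwa [IsLocalRing.mem_maximalIdeal, mem_nonunits_iff]
            have h2 : (g : Matrix (Fin d) (Fin d) R) P1 P
                + (g : Matrix (Fin d) (Fin d) R) i0 P ∈ IsLocalRing.maximalIdeal R := by
              rwa [IsLocalRing.mem_maximalIdeal, mem_nonunits_iff]
            have hmem : (g : Matrix (Fin d) (Fin d) R) i0 P ∈ IsLocalRing.maximalIdeal R := by
              simpa using (IsLocalRing.maximalIdeal R).sub_mem h2 h1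
            rw [IsLocalRing.mem_maximalIdeal, mem_nonunits_iff] at hmem
            exact hmem hi0u
        obtain ⟨s, hsu⟩ := hs
        obtain ⟨gA, hgAdef⟩ : ∃ x, x = PP (IA.map fun i => ((P1, i), s i)) * g := ⟨_, rfl⟩
        have hA : ∀ a b : Fin d, (gA : Matrix (Fin d) (Fin d) R) a b
            = (g : Matrix (Fin d) (Fin d) R) a b
              + if a = P1 then (IA.map fun i =>
                  s i * (g : Matrix (Fin d) (Fin d) R) i b).sum else 0 := by
          intro a b
          rw [hgAdef]
          exact rowP_apply P1 IA hIAne s g a b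
        have hAu : IsUnit ((gA : Matrix (Fin d) (Fin d) R) P1 P) := by
          rw [hA P1 P, if_pos rfl]
          exact hsu
        have hAid : ∀ i j : Fin d, ((i : ℕ) < p ∨ (j : ℕ) < p) →
            (gA : Matrix (Fin d) (Fin d) R) i j = if i = j then 1 else 0 := by
          intro i j hij
          rw [hA i j]
          by_cases hi : i = P1
          · have hival := congrArg Fin.val hi
            have hj : (j : ℕ) < p := by
              rcases hij with h | h
              · omega
              · exact h
            have hs0 : (IA.map fun i' => s i' * (g : Matrix (Fin d) (Fin d) R) i' j).sum = 0 := by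
              apply List.sum_eq_zero
              intro x hx
              obtain ⟨i', hi', rfl⟩ := List.mem_map.mp hx
              have hmem := (hIAmem i').mp hi'
              rw [hgp i' j (Or.inr hj), if_neg (fun h => by
                have := congrArg Fin.val h; omega), mul_zero]
            rw [if_pos hi, hs0, add_zero, hgp i j hij]
          · rw [if_neg hi, add_zero, hgp i j hij]
        -- Step T : make the (P, P) entry equal to 1
        obtain ⟨uA, huA⟩ := hAu
        obtain ⟨t, htdef⟩ : ∃ x : R, x = (1 - (gA : Matrix (Fin d) (Fin d) R) P P)
          * ((uA⁻¹ : Rˣ) : R) := ⟨_, rfl⟩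
        have hsng : ∀ i ∈ [P1], i ≠ P := by
          intro i hi
          rw [List.mem_singleton] at hi
          subst hi
          exact fun h => hPP1 h.symm
        obtain ⟨gT, hgTdef⟩ : ∃ x, x = PP ([P1].map fun i => ((P, i), t)) * gA := ⟨_, rfl⟩
        have hT : ∀ a b : Fin d, (gT : Matrix (Fin d) (Fin d) R) a b
            = (gA : Matrix (Fin d) (Fin d) R) a b
              + if a = P then t * (gA : Matrix (Fin d) (Fin d) R) P1 b else 0 := by
          intro a b
          rw [hgTdef]
          have h := rowP_apply P [P1] hsng (fun _ => t) gA a b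
          simpa using h
        have hTPP : (gT : Matrix (Fin d) (Fin d) R) P P = 1 := by
          rw [hT P P, if_pos rfl, htdef]
          have hinv : ((uA⁻¹ : Rˣ) : R) * (gA : Matrix (Fin d) (Fin d) R) P1 P = 1 := by
            rw [← huA]
            exact Units.inv_mul _
          rw [mul_assoc, hinv, mul_one]
          ring
        have hTid : ∀ i j : Fin d, ((i : ℕ) < p ∨ (j : ℕ) < p) →
            (gT : Matrix (Fin d) (Fin d) R) i j = if i = j then 1 else 0 := by
          intro i j hij
          rw [hT i j]
          by_cases hi : i = P
          · have hival := congrArg Fin.val hi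
            have hj : (j : ℕ) < p := by
              rcases hij with h | h
              · omega
              · exact h
            have hPj : (gA : Matrix (Fin d) (Fin d) R) P1 j = 0 := by
              rw [hAid P1 j (Or.inr hj)]
              exact if_neg (fun h => by have := congrArg Fin.val h; omega)
            rw [if_pos hi, hPj, mul_zero, add_zero, hAid i j hij]
          · rw [if_neg hi, add_zero, hAid i j hij]
        -- Step C : clear column P below the diagonal
        obtain ⟨cc, hccdef⟩ : ∃ x : Fin d → R,
          x = fun i => -((gT : Matrix (Fin d) (Fin d) R) i P) := ⟨_, rfl⟩
        obtain ⟨gC, hgCdef⟩ : ∃ x, x = PP (Ic.map fun i => ((i, P), cc i)) * gT := ⟨_, rfl⟩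
        have hC : ∀ a b : Fin d, (gC : Matrix (Fin d) (Fin d) R) a b
            = (gT : Matrix (Fin d) (Fin d) R) a b
              + if a ∈ Ic then cc a * (gT : Matrix (Fin d) (Fin d) R) P b else 0 := by
          intro a b
          rw [hgCdef]
          exact colP_apply P Ic hIcne hIcnd cc gT a b
        have hCrow : ∀ b : Fin d, (gC : Matrix (Fin d) (Fin d) R) P b
            = (gT : Matrix (Fin d) (Fin d) R) P b := by
          intro b
          rw [hC P b, if_neg hPIc, add_zero]
        have hCPP : (gC : Matrix (Fin d) (Fin d) R) P P = 1 := by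
          rw [hCrow, hTPP]
        have hCcol : ∀ i ∈ Ic, (gC : Matrix (Fin d) (Fin d) R) i P = 0 := by
          intro i hi
          rw [hC i P, if_pos hi, hTPP, hccdef]
          show (gT : Matrix (Fin d) (Fin d) R) i P
            + -((gT : Matrix (Fin d) (Fin d) R) i P) * 1 = 0
          ring
        have hCid : ∀ i j : Fin d, ((i : ℕ) < p ∨ (j : ℕ) < p) →
            (gC : Matrix (Fin d) (Fin d) R) i j = if i = j then 1 else 0 := by
          intro i j hij
          rw [hC i j]
          by_cases hi : i ∈ Ic
          · have hival := (hIcmem i).mp hi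
            have hj : (j : ℕ) < p := by
              rcases hij with h | h
              · omega
              · exact h
            have hPj : (gT : Matrix (Fin d) (Fin d) R) P j = 0 := by
              rw [hTid P j (Or.inr hj)]
              exact if_neg (fun h => by have := congrArg Fin.val h; omega)
            rw [if_pos hi, hPj, mul_zero, add_zero, hTid i j hij]
          · rw [if_neg hi, add_zero, hTid i j hij]
        -- Step D : clear row P to the right of the diagonal
        obtain ⟨ee, heedef⟩ : ∃ x : Fin d → R,
          x = fun i => -((gC : Matrix (Fin d) (Fin d) R) P i) := ⟨_, rfl⟩
        obtain ⟨gD, hgDdef⟩ : ∃ x, x = gC * PP (Ic.map fun i => ((P, i), ee i)) := ⟨_, rfl⟩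
        have hD : ∀ a b : Fin d, (gD : Matrix (Fin d) (Fin d) R) a b
            = (gC : Matrix (Fin d) (Fin d) R) a b
              + if b ∈ Ic then (gC : Matrix (Fin d) (Fin d) R) a P * ee b else 0 := by
          intro a b
          rw [hgDdef]
          exact rtP_apply P Ic hIcne hIcnd ee gC a b
        have hDid : ∀ i j : Fin d, ((i : ℕ) < p + 1 ∨ (j : ℕ) < p + 1) →
            (gD : Matrix (Fin d) (Fin d) R) i j = if i = j then 1 else 0 := by
          intro i j hij
          rw [hD i j]
          by_cases hj : j ∈ Ic
          · have hjval := (hIcmem j).mp hj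
            have hi1 : (i : ℕ) < p + 1 := by
              rcases hij with h | h
              · exact h
              · omega
            by_cases hiP : i = P
            · rw [if_pos hj, hiP, hCPP, heedef]
              show (gC : Matrix (Fin d) (Fin d) R) P j
                + 1 * -((gC : Matrix (Fin d) (Fin d) R) P j) = if P = j then 1 else 0
              rw [if_neg (fun h => by have := congrArg Fin.val h; omega)]
              ring
            · have hi : (i : ℕ) < p := by
                have : (i : ℕ) ≠ p := fun h => hiP (Fin.val_injective (h.trans hPv.symm))
                omega
              rw [if_pos hj, hCid i P (Or.inl hi), if_neg hiP, zero_mul, add_zero,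
                hCid i j (Or.inl hi)]
          · rw [if_neg hj, add_zero]
            have hjle : (j : ℕ) < p + 1 := by
              have : ¬(p + 1 ≤ (j : ℕ)) := fun hle => hj ((hIcmem j).mpr hle)
              omega
            by_cases hjp : (j : ℕ) < p
            · exact hCid i j (Or.inr hjp)
            · have hjP : j = P := Fin.val_injective (by omega)
              rw [hjP]
              by_cases hiP : i = P
              · rw [hiP, hCPP, if_pos rfl]
              · by_cases hip : (i : ℕ) < p
                · rw [hCid i P (Or.inl hip)]
                · have hiIc : i ∈ Ic := (hIcmem i).mpr (by
                    have : (i : ℕ) ≠ p := fun h => hiP (Fin.val_injective (h.trans hPv.symm))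
                    omega)
                  rw [hCcol i hiIc, if_neg hiP]
        -- apply the induction hypothesis to gD
        have hgD := hexpr' gD (fun i j hij => hDid i j (by omega))
        -- reassemble
        have e1 : gD * PP (Ic.map fun i => ((P, i), -(ee i))) = gC := by
          rw [hgDdef]
          exact rtP_cancel P Ic hIcne hIcnd ee gC
        have e2 : PP (Ic.map fun i => ((i, P), -(cc i))) * gC = gT := by
          rw [hgCdef]
          exact colP_cancel P Ic hIcne hIcnd cc gT
        have e3 : PP ([P1].map fun i => ((P, i), -t)) * gT = gA := by
          rw [hgTdef]
          exact rowP_cancel P [P1] hsng (fun _ => t) gA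
        have e4 : PP (IA.map fun i => ((P1, i), -(s i))) * gA = g := by
          rw [hgAdef]
          exact rowP_cancel P1 IA hIAne s g
        have hgeq : g = PP (IA.map fun i => ((P1, i), -(s i))) *
            (PP ([P1].map fun i => ((P, i), -t)) *
            (PP (Ic.map fun i => ((i, P), -(cc i))) *
            (gD * PP (Ic.map fun i => ((P, i), -(ee i)))))) := by
          rw [e1, e2, e3, e4]
        rw [hgeq]
        refine CanExpr.mul ?_ (CanExpr.mul ?_ (CanExpr.mul ?_ (CanExpr.mul hgD ?_)))
        · have h := canExpr_PP (IA.map fun i => ((P1, i), -(s i)))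
          rw [List.map_map] at h
          exact h
        · exact canExpr_PP [((P, P1), -t)]
        · have h := canExpr_PP (Ic.map fun i => ((i, P), -(cc i)))
          rw [List.map_map] at h
          exact h
        · have h := canExpr_PP (Ic.map fun i => ((P, i), -(ee i)))
          rw [List.map_map] at h
          exact h


lemma elem'_eq_elem {q q' : Fin d × Fin d} (h : q' = q) (hq : q'.1 ≠ q'.2) (x : R) :
    elem' q.1 q.2 x = elem q'.1 q'.2 hq x := by
  subst h
  exact elem'_eq q'.1 q'.2 hq x

lemma Len_succ (n : ℕ) (h : 1 ≤ n) : Len (n + 1) = Len n + 3 * n + 1 := by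
  obtain ⟨m, rfl⟩ : ∃ m, n = m + 1 := ⟨n - 1, by omega⟩
  rw [show Len (m + 1 + 1) = Len (m + 1) + 3 * m + 4 from rfl]
  omega

lemma Len_eq (n : ℕ) (hn : 2 ≤ n) : 2 * Len n = 3 * n ^ 2 - n - 2 := by
  induction n, hn using Nat.le_induction with
  | base => rfl
  | succ n hn ih =>
    rw [Len_succ n (by omega)]
    have hsq : (n + 1) ^ 2 = n ^ 2 + 2 * n + 1 := by ring
    have h2 : n + 2 ≤ 3 * n ^ 2 := by nlinarith
    omega

end BEG

/-- For a commutative local ring `R̄` and `d ≥ 2`, there is a fixed sequence of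
`M = (3d² − d − 2)/2` pairs of distinct indices such that every `g ∈ SL_d(R̄)` is a product
`E_{i₁j₁}(r₁) ⋯ E_{i_M j_M}(r_M)` for suitable ring elements `r_s`. -/
theorem bounded_elementary_generation_of_localRing (R : Type*) [CommRing R] [IsLocalRing R]
    (d : ℕ) (hd : 2 ≤ d) :
    ∃ f : Fin ((3 * d ^ 2 - d - 2) / 2) → {p : Fin d × Fin d // p.1 ≠ p.2},
      ∀ g : Matrix.SpecialLinearGroup (Fin d) R,
        ∃ r : Fin ((3 * d ^ 2 - d - 2) / 2) → R,
          g = (List.ofFn fun s => elem (f s).1.1 (f s).1.2 (f s).2 (r s)).prod := by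
  obtain ⟨l, hval, hlen, hexpr⟩ := BEG.main (R := R) (d := d) d le_rfl
  have h2 : 2 * BEG.Len d = 3 * d ^ 2 - d - 2 := BEG.Len_eq d hd
  have hM : l.length = (3 * d ^ 2 - d - 2) / 2 := by omega
  refine ⟨fun s => ⟨l[(s : ℕ)]'(by have := s.2; omega), hval _ (List.getElem_mem _)⟩, ?_⟩
  intro g
  obtain ⟨cs, hcs1, hcs2⟩ := hexpr g (by
    intro i j hij
    exfalso
    rcases hij with h | h <;> omega)
  have hcl : cs.length = l.length := by rw [← hcs1, List.length_map]
  refine ⟨fun s => (cs[(s : ℕ)]'(by have := s.2; omega)).2, ?_⟩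
  rw [hcs2]
  show BEG.PP cs = _
  unfold BEG.PP
  congr 1
  apply List.ext_getElem
  · rw [List.length_map, List.length_ofFn]
    omega
  · intro k h1 h2'
    rw [List.getElem_map, List.getElem_ofFn]
    have h1' : k < cs.length := by
      rw [List.length_map] at h1
      exact h1
    have h1l : k < l.length := by omega
    have hlk : l[k] = (cs[k]'h1').1 := by
      have heq := List.getElem_of_eq hcs1.symm h1l
      rw [heq, List.getElem_map]
    exact BEG.elem'_eq_elem hlk _ _
end

section
/- Let R̄ be a finite commutative local ring which admits a surjective ring homomorphism from ℤ[x_1,…,x_k]. Then the maximal ideal Ī of R̄ is generated (as an ideal) by at most k + 1 elements. -/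
lemma exists_pow_stab {R : Type*} [Monoid R] [Finite R] (b : R) (q : ℕ) :
    ∃ n, 1 ≤ n ∧ (b ^ q ^ n) ^ q ^ n = b ^ q ^ n := by
  obtain ⟨i, j, hij, hfe⟩ := Finite.exists_ne_map_eq_of_infinite (fun n : ℕ => b ^ q ^ n)
  wlog h : i < j generalizing i j
  · exact this j i (Ne.symm hij) hfe.symm (by omega)
  have key : ∀ m, i ≤ m → b ^ q ^ (m + (j - i)) = b ^ q ^ m := by
    intro m hm
    have h1 : b ^ q ^ (m + (j - i)) = (b ^ q ^ j) ^ q ^ (m - i) := by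
      rw [← pow_mul, ← pow_add]
      congr 1
      congr 1
      omega
    have h2 : b ^ q ^ m = (b ^ q ^ i) ^ q ^ (m - i) := by
      rw [← pow_mul, ← pow_add]
      congr 1
      congr 1
      omega
    rw [h1, h2, hfe]
  have key2 : ∀ t m, i ≤ m → b ^ q ^ (m + (j - i) * t) = b ^ q ^ m := by
    intro t
    induction t with
    | zero => simp
    | succ t ih =>
      intro m hm
      have e1 : m + (j - i) * (t + 1) = (m + (j - i) * t) + (j - i) := by ring
      rw [e1, key _ (by omega), ih m hm]
  refine ⟨(j - i) * (i + 1), by nlinarith [Nat.sub_pos_of_lt h], ?_⟩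
  rw [← pow_mul, ← pow_add]
  exact key2 (i + 1) ((j - i) * (i + 1)) (by nlinarith [Nat.sub_pos_of_lt h])

lemma intCast_pow_char_pow {A : Type*} [CommRing A] (p : ℕ) (hp : p.Prime) [CharP A p]
    (e : ℕ) (a : ℤ) : (a : A) ^ p ^ e = a := by
  haveI := Fact.mk hp
  induction e with
  | zero => simp
  | succ e ih =>
    rw [pow_succ, pow_mul, ih]
    have hdvd : (p : ℤ) ∣ a ^ p - a := by
      rw [← ZMod.intCast_zmod_eq_zero_iff_dvd]
      push_cast
      rw [ZMod.pow_card]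
      ring
    obtain ⟨t, ht⟩ := hdvd
    have h2 : ((a ^ p - a : ℤ) : A) = (((p : ℤ) * t : ℤ) : A) := by rw [ht]
    push_cast at h2
    rw [CharP.cast_eq_zero A p, zero_mul] at h2
    have h3 := sub_eq_zero.mp h2
    push_cast at h3 ⊢
    exact h3

lemma pow_pow_stab {R : Type*} [Monoid R] (c : R) (q n : ℕ) (hc : c ^ q ^ n = c) :
    ∀ t, c ^ q ^ (n * t) = c := by
  intro t
  induction t with
  | zero => simp
  | succ t ih =>
    have h1 : q ^ (n * (t + 1)) = q ^ (n * t) * q ^ n := by rw [← pow_add]; ring_nf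
    rw [h1, pow_mul, ih, hc]

/-- If a finite commutative local ring `R̄` is an image of `ℤ[x₁,…,x_k]`, then its maximal
ideal is generated by at most `k + 1` elements. -/
theorem maximalIdeal_fg_of_surjective_mvPolynomial (k : ℕ) (R : Type*) [CommRing R]
    [Finite R] [IsLocalRing R]
    (hsurj : ∃ f : MvPolynomial (Fin k) ℤ →+* R, Function.Surjective f) :
    ∃ s : Finset R, s.card ≤ k + 1 ∧
      Ideal.span (s : Set R) = IsLocalRing.maximalIdeal R := by
  classical
  obtain ⟨f, hf⟩ := hsurj
  haveI : Finite (IsLocalRing.ResidueField R) :=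
    Finite.of_surjective (IsLocalRing.residue R) Ideal.Quotient.mk_surjective
  haveI : Fintype (IsLocalRing.ResidueField R) := Fintype.ofFinite _
  set q := Fintype.card (IsLocalRing.ResidueField R) with hq
  set p := ringChar (IsLocalRing.ResidueField R) with hpdef
  obtain ⟨d, hpprime, hcard⟩ := FiniteField.card (IsLocalRing.ResidueField R) p
  haveI := Fact.mk hpprime
  -- Teichmüller-type lifts
  have hT : ∀ b : R, ∃ c : R, (∃ n, 1 ≤ n ∧ c ^ q ^ n = c) ∧
      b - c ∈ IsLocalRing.maximalIdeal R := by
    intro b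
    obtain ⟨n, hn1, hc⟩ := exists_pow_stab b q
    refine ⟨b ^ q ^ n, ⟨n, hn1, hc⟩, ?_⟩
    rw [← IsLocalRing.residue_eq_zero_iff, map_sub, map_pow]
    have hiter : ∀ t : ℕ, (IsLocalRing.residue R b) ^ q ^ t = IsLocalRing.residue R b := by
      intro t
      induction t with
      | zero => simp
      | succ t ih => rw [pow_succ, pow_mul, ih, hq]; exact FiniteField.pow_card _
    rw [hiter n, sub_self]
  choose c hcpow hcm using fun i : Fin k => hT (f (MvPolynomial.X i))
  choose n hn1 hcn using hcpow
  set N := ∏ i : Fin k, n i with hN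
  have hN1 : 1 ≤ N := Finset.one_le_prod' (fun i _ => hn1 i)
  have hcN : ∀ i, c i ^ q ^ N = c i := by
    intro i
    obtain ⟨t, ht⟩ := Finset.dvd_prod_of_mem n (Finset.mem_univ i)
    rw [hN, ht]
    exact pow_pow_stab (c i) q (n i) (hcn i) t
  set e := (d : ℕ) * N with he
  have he0 : e ≠ 0 := by
    have := d.pos
    simp only [he]
    positivity
  have hQ : q ^ N = p ^ e := by rw [hq, hcard, ← pow_mul, ← he]
  set s : Finset R := insert ((p : R))
    (Finset.image (fun i => f (MvPolynomial.X i) - c i) Finset.univ) with hs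
  refine ⟨s, ?_, ?_⟩
  · calc s.card ≤ (Finset.image (fun i => f (MvPolynomial.X i) - c i) Finset.univ).card + 1 :=
        Finset.card_insert_le _ _
      _ ≤ k + 1 := by
        have := Finset.card_image_le (s := (Finset.univ : Finset (Fin k)))
          (f := fun i => f (MvPolynomial.X i) - c i)
        simp only [Finset.card_univ, Fintype.card_fin] at this
        omega
  set J := Ideal.span (s : Set R) with hJ
  have hJm : J ≤ IsLocalRing.maximalIdeal R := by
    rw [hJ, Ideal.span_le]
    intro x hx
    simp only [hs, Finset.coe_insert, Set.mem_insert_iff, Finset.coe_image, Set.mem_image,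
      Finset.mem_coe, Finset.mem_univ, true_and] at hx
    rcases hx with rfl | ⟨i, rfl⟩
    · rw [SetLike.mem_coe, ← IsLocalRing.residue_eq_zero_iff, map_natCast]
      exact CharP.cast_eq_zero _ p
    · exact hcm i
  have hJtop : J ≠ ⊤ := fun h =>
    (IsLocalRing.maximalIdeal.isMaximal R).ne_top (top_unique (h ▸ hJm))
  haveI : Nontrivial (R ⧸ J) := Ideal.Quotient.nontrivial_iff.mpr hJtop
  have hpJ : (p : R) ∈ J := Ideal.subset_span (by simp [hs])
  have hpA : ((p : ℕ) : R ⧸ J) = 0 := by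
    rw [← map_natCast (Ideal.Quotient.mk J), Ideal.Quotient.eq_zero_iff_mem]
    exact hpJ
  haveI : CharP (R ⧸ J) p := by
    have hdvd : ringChar (R ⧸ J) ∣ p := (ringChar.spec (R ⧸ J) p).mp hpA
    rcases hpprime.eq_one_or_self_of_dvd _ hdvd with h1 | h1
    · exact absurd h1 (CharP.char_ne_one (R ⧸ J) (ringChar (R ⧸ J)))
    · exact ringChar.of_eq h1
  have key : ∀ x : R, (Ideal.Quotient.mk J x) ^ p ^ e = Ideal.Quotient.mk J x := by
    intro x
    obtain ⟨P, rfl⟩ := hf x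
    induction P using MvPolynomial.induction_on with
    | C a =>
      have h1 : f (MvPolynomial.C a) = (a : R) := eq_intCast (f.comp MvPolynomial.C) a
      rw [h1, map_intCast]
      exact intCast_pow_char_pow p hpprime e a
    | add P Q ihP ihQ =>
      rw [map_add, map_add, add_pow_char_pow, ihP, ihQ]
    | mul_X P i ihP =>
      rw [map_mul, map_mul, mul_pow, ihP]
      congr 1
      have hbc : Ideal.Quotient.mk J (f (MvPolynomial.X i)) = Ideal.Quotient.mk J (c i) :=
        Ideal.Quotient.eq.mpr (Ideal.subset_span
          (Finset.mem_coe.mpr (Finset.mem_insert_of_mem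
            (Finset.mem_image_of_mem _ (Finset.mem_univ i)))))
      rw [hbc, ← map_pow, ← hQ, hcN i]
  obtain ⟨t, ht⟩ := IsArtinianRing.isNilpotent_jacobson_bot (R := R)
  rw [IsLocalRing.jacobson_eq_maximalIdeal ⊥ bot_ne_top] at ht
  have hmJ : IsLocalRing.maximalIdeal R ≤ J := by
    intro x hx
    have hxn : x ^ t = 0 := by
      have h4 := Ideal.pow_mem_pow hx t
      rw [ht] at h4
      simpa using h4
    rw [← Ideal.Quotient.eq_zero_iff_mem]
    have hiter : ∀ u : ℕ, (Ideal.Quotient.mk J x) ^ (p ^ e) ^ u = Ideal.Quotient.mk J x := by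
      intro u
      induction u with
      | zero => simp
      | succ u ih => rw [pow_succ, pow_mul, ih, key]
    have hge : t ≤ (p ^ e) ^ t := by
      calc t ≤ 2 ^ t := (Nat.lt_two_pow_self (n := t)).le
        _ ≤ (p ^ e) ^ t := Nat.pow_le_pow_left
          (le_trans hpprime.two_le (Nat.le_self_pow he0 p)) t
    calc Ideal.Quotient.mk J x = (Ideal.Quotient.mk J x) ^ (p ^ e) ^ t := (hiter t).symm
      _ = (Ideal.Quotient.mk J x) ^ t * (Ideal.Quotient.mk J x) ^ ((p ^ e) ^ t - t) := by
          rw [← pow_add]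
          congr 1
          omega
      _ = 0 := by rw [← map_pow, hxn, map_zero, zero_mul]
  exact le_antisymm hJm hmJ
end
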